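/- arXiv:2304.07573 — 2 statements merged into one kernel-verified Lean document; each statement's English description precedes it below -/
import Mathlib

section
/- With the same masking setup (y_i = g_i + Σ_{j>i} s_{ij} − Σ_{j<i} s_{ji}, all g's and s's independent and the s's uniform on F^p), for E ≥ 3 clients and any single client index t, the collection of masked values (y_i)_{i ≠ t} is independent of g_t given Σ_i g_i. Equivalently, I(g_t ; (y_i)_{i≠t} | Σ_i g_i) = 0 fails to reveal any information about g_t beyond the sum. -/
open Finset

noncomputable def prEq {Ω : Type*} [Fintype Ω] {α : Type*} [DecidableEq α]
    (μ : Ω → ℝ) (X : Ω → α) (a : α) : ℝ :=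
  ∑ ω, if X ω = a then μ ω else 0

open scoped Classical in
noncomputable def prEvent {Ω : Type*} [Fintype Ω] (μ : Ω → ℝ) (s : Ω → Prop) : ℝ :=
  ∑ ω, if s ω then μ ω else 0

noncomputable def entro {Ω α : Type*} [Fintype Ω] [Fintype α] [DecidableEq α]
    (μ : Ω → ℝ) (X : Ω → α) : ℝ :=
  ∑ a, Real.negMulLog (prEq μ X a)

noncomputable def condEntro {Ω α β : Type*} [Fintype Ω] [Fintype α] [DecidableEq α]
    [Fintype β] [DecidableEq β] (μ : Ω → ℝ) (X : Ω → α) (Y : Ω → β) : ℝ :=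
  entro μ (fun ω => (X ω, Y ω)) - entro μ Y

noncomputable def mutInfo {Ω α β : Type*} [Fintype Ω] [Fintype α] [DecidableEq α]
    [Fintype β] [DecidableEq β] (μ : Ω → ℝ) (X : Ω → α) (Y : Ω → β) : ℝ :=
  entro μ X + entro μ Y - entro μ (fun ω => (X ω, Y ω))

noncomputable def condMutInfo {Ω α β γ : Type*} [Fintype Ω] [Fintype α] [DecidableEq α]
    [Fintype β] [DecidableEq β] [Fintype γ] [DecidableEq γ]
    (μ : Ω → ℝ) (X : Ω → α) (Y : Ω → β) (Z : Ω → γ) : ℝ :=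
  condEntro μ X Z + condEntro μ Y Z - condEntro μ (fun ω => (X ω, Y ω)) Z

def IsPMF {Ω : Type*} [Fintype Ω] (μ : Ω → ℝ) : Prop :=
  (∀ ω, 0 ≤ μ ω) ∧ ∑ ω, μ ω = 1

def IndepRV {Ω α β : Type*} [Fintype Ω] [DecidableEq α] [DecidableEq β]
    (μ : Ω → ℝ) (X : Ω → α) (Y : Ω → β) : Prop :=
  ∀ a b, prEq μ (fun ω => (X ω, Y ω)) (a, b) = prEq μ X a * prEq μ Y b

lemma prEq_comp {Ω A B : Type*} [Fintype Ω] [Fintype A] [DecidableEq A] [DecidableEq B]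
    (μ : Ω → ℝ) (T : Ω → A) (f : A → B) (b : B) :
    prEq μ (fun ω => f (T ω)) b = ∑ a ∈ univ.filter (fun a => f a = b), prEq μ T a := by
  unfold prEq
  rw [Finset.sum_comm]
  refine Finset.sum_congr rfl fun ω _ => ?_
  rw [Finset.sum_ite_eq (univ.filter (fun a => f a = b)) (T ω) (fun _ => μ ω)]
  simp

lemma card_fiber_const {A B : Type*} [Fintype A] [DecidableEq A] [DecidableEq B]
    [AddCommGroup A] [AddCommGroup B] (f : A →+ B) (hf : Function.Surjective f) (b c : B) :
    (univ.filter (fun a => f a = b)).card = (univ.filter (fun a => f a = c)).card := by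
  obtain ⟨ab, hab⟩ := hf b
  obtain ⟨ac, hac⟩ := hf c
  refine Finset.card_bij' (fun a _ => a - ab + ac) (fun a _ => a - ac + ab) ?_ ?_ ?_ ?_
  · intro a ha
    simp only [mem_filter, mem_univ, true_and] at ha ⊢
    simp [map_add, map_sub, ha, hab, hac]
  · intro a ha
    simp only [mem_filter, mem_univ, true_and] at ha ⊢
    simp [map_add, map_sub, ha, hab, hac]
  · intro a _; simp
  · intro a _; simp

lemma prEq_uniform_comp {Ω A B : Type*} [Fintype Ω] [Fintype A] [DecidableEq A]
    [Fintype B] [DecidableEq B] [AddCommGroup A] [AddCommGroup B]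
    (μ : Ω → ℝ) (T : Ω → A)
    (hT : ∀ a, prEq μ T a = 1 / (Fintype.card A : ℝ))
    (f : A →+ B) (hf : Function.Surjective f) (b : B) :
    prEq μ (fun ω => f (T ω)) b = 1 / (Fintype.card B : ℝ) := by
  have hA : (Fintype.card A : ℕ) = ∑ b' : B, (univ.filter (fun a => f a = b')).card := by
    rw [← Finset.card_univ]
    exact Finset.card_eq_sum_card_fiberwise (fun a _ => Finset.mem_univ _)
  have hconst : ∀ b' : B, (univ.filter (fun a => f a = b')).card
      = (univ.filter (fun a => f a = b)).card := fun b' => card_fiber_const f hf b' b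
  set K := (univ.filter (fun a => f a = b)).card with hK
  have hA2 : Fintype.card A = Fintype.card B * K := by
    rw [hA, Finset.sum_congr rfl (fun b' _ => hconst b'), Finset.sum_const, Finset.card_univ,
      smul_eq_mul]
  have hKpos : 0 < K := by
    rcases Nat.eq_zero_or_pos K with h | h
    · rw [h, mul_zero] at hA2; exact absurd hA2 Fintype.card_ne_zero
    · exact h
  have hBpos : 0 < Fintype.card B := Fintype.card_pos
  rw [prEq_comp, Finset.sum_congr rfl (fun a _ => hT a), Finset.sum_const, ← hK, nsmul_eq_mul,
    hA2]
  push_cast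
  rw [mul_one_div]
  rw [div_eq_div_iff (by positivity) (by positivity)]
  ring

lemma entro_uniform {Ω B : Type*} [Fintype Ω] [Fintype B] [DecidableEq B]
    (μ : Ω → ℝ) (W : Ω → B) (h : ∀ b, prEq μ W b = 1 / (Fintype.card B : ℝ)) :
    entro μ W = Real.log (Fintype.card B) := by
  rcases isEmpty_or_nonempty B with hB | hB
  · simp [entro, Fintype.card_eq_zero]
  unfold entro
  rw [Finset.sum_congr rfl (fun b _ => by rw [h b]), Finset.sum_const, Finset.card_univ,
    nsmul_eq_mul]
  have hBpos : (0:ℝ) < Fintype.card B := by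
    exact_mod_cast Fintype.card_pos
  rw [Real.negMulLog, one_div, Real.log_inv]
  field_simp


section MaskingAux

abbrev MaskIdx (E : ℕ) := {q : Fin E × Fin E // q.1 < q.2}

variable {V : Type*} [AddCommGroup V] {E : ℕ}

def yfun (p : (Fin E → V) × (MaskIdx E → V)) (i : Fin E) : V :=
  p.1 i + ∑ q ∈ univ.filter (fun q : MaskIdx E => q.1.1 = i), p.2 q
        - ∑ q ∈ univ.filter (fun q : MaskIdx E => q.1.2 = i), p.2 q

lemma yfun_add (p q : (Fin E → V) × (MaskIdx E → V)) (i : Fin E) :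
    yfun (p + q) i = yfun p i + yfun q i := by
  simp only [yfun, Prod.fst_add, Prod.snd_add, Pi.add_apply, Finset.sum_add_distrib]
  abel

def bigMap (t : Fin E) : ((Fin E → V) × (MaskIdx E → V)) →+ (V × ({i : Fin E // i ≠ t} → V)) × V :=
  AddMonoidHom.mk' (fun p => ((p.1 t, fun i => yfun p i.1), ∑ i, p.1 i)) (by
    intro p q
    refine Prod.ext (Prod.ext rfl (funext fun i => yfun_add p q i.1)) ?_
    simp [Finset.sum_add_distrib])

lemma bigMap_surj (hE : 2 ≤ E) (t : Fin E) :
    Function.Surjective (bigMap (V := V) t) := by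
  obtain ⟨u, hu⟩ := Fintype.exists_ne_of_one_lt_card (by simpa using by omega) t
  rintro ⟨⟨a, b⟩, c⟩
  set gv : Fin E → V := fun i => if i = t then a else if i = u then c - a else 0 with hgv
  set sv : MaskIdx E → V := fun q =>
    if h : q.1.2 = t then b ⟨q.1.1, ne_of_lt (h ▸ q.2)⟩ - gv q.1.1
    else if h' : q.1.1 = t then gv q.1.2 - b ⟨q.1.2, ne_of_gt (h' ▸ q.2)⟩
    else 0 with hsv
  refine ⟨(gv, sv), ?_⟩
  have hgt : gv t = a := by simp [hgv]
  have hsum : ∑ i, gv i = c := by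
    have hpt : ∀ i, gv i = (if i = t then a else 0) + (if i = u then c - a else 0) := by
      intro i
      by_cases h1 : i = t
      · subst h1
        have h2 : i ≠ u := fun h => hu (h.symm)
        simp [hgv, h2]
      · by_cases h2 : i = u <;> simp [hgv, h1, h2, hu]
    rw [Finset.sum_congr rfl fun i _ => hpt i, Finset.sum_add_distrib,
      Finset.sum_ite_eq' univ t (fun _ => a), Finset.sum_ite_eq' univ u (fun _ => c - a)]
    simp
  have hyf : ∀ i : {i : Fin E // i ≠ t}, yfun (gv, sv) i.1 = b i := by
    rintro ⟨i0, hi⟩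
    rcases lt_or_gt_of_ne hi with hlt | hgt2
    · -- i0 < t : the mask (i0, t) appears with + sign in y_{i0}
      have hS1 : ∑ q ∈ univ.filter (fun q : MaskIdx E => q.1.1 = i0), sv q
          = b ⟨i0, hi⟩ - gv i0 := by
        refine Finset.sum_eq_single_of_mem ⟨(i0, t), hlt⟩ (by simp) ?_ |>.trans ?_
        · rintro ⟨⟨qa, qb⟩, hq⟩ hmem hne
          simp only [mem_filter, mem_univ, true_and] at hmem
          subst hmem
          have hqb : qb ≠ t := fun h => hne (Subtype.ext (Prod.ext rfl h))
          simp [hsv, hqb, hi]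
        · rw [hsv]; simp
      have hS2 : ∑ q ∈ univ.filter (fun q : MaskIdx E => q.1.2 = i0), sv q = 0 := by
        refine Finset.sum_eq_zero ?_
        rintro ⟨⟨qa, qb⟩, hq⟩ hmem
        simp only [mem_filter, mem_univ, true_and] at hmem
        subst hmem
        have hqa : qa ≠ t := ne_of_lt (lt_trans hq hlt)
        simp [hsv, hi, hqa]
      rw [yfun]; dsimp only; rw [hS1, hS2]; abel
    · -- t < i0 : the mask (t, i0) appears with - sign in y_{i0}
      have hS1 : ∑ q ∈ univ.filter (fun q : MaskIdx E => q.1.1 = i0), sv q = 0 := by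
        refine Finset.sum_eq_zero ?_
        rintro ⟨⟨qa, qb⟩, hq⟩ hmem
        simp only [mem_filter, mem_univ, true_and] at hmem
        subst hmem
        have hqb : qb ≠ t := ne_of_gt (lt_trans hgt2 hq)
        simp [hsv, hqb, hi]
      have hS2 : ∑ q ∈ univ.filter (fun q : MaskIdx E => q.1.2 = i0), sv q
          = gv i0 - b ⟨i0, hi⟩ := by
        refine Finset.sum_eq_single_of_mem ⟨(t, i0), hgt2⟩ (by simp) ?_ |>.trans ?_
        · rintro ⟨⟨qa, qb⟩, hq⟩ hmem hne
          simp only [mem_filter, mem_univ, true_and] at hmem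
          subst hmem
          have hqa : qa ≠ t := fun h => hne (Subtype.ext (Prod.ext h rfl))
          simp [hsv, hi, hqa]
        · simp only [hsv]
          have hne2 : (i0 : Fin E) ≠ t := hi
          simp [hne2]
      rw [yfun]; dsimp only; rw [hS1, hS2]; abel
  exact Prod.ext (Prod.ext hgt (funext fun i => hyf i)) hsum

def xzMap (t : Fin E) : ((Fin E → V) × (MaskIdx E → V)) →+ V × V :=
  AddMonoidHom.mk' (fun p => (p.1 t, ∑ i, p.1 i)) (by
    intro p q; refine Prod.ext rfl ?_; simp [Finset.sum_add_distrib])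

def yzMap (t : Fin E) : ((Fin E → V) × (MaskIdx E → V)) →+ ({i : Fin E // i ≠ t} → V) × V :=
  AddMonoidHom.mk' (fun p => (fun i => yfun p i.1, ∑ i, p.1 i)) (by
    intro p q
    refine Prod.ext (funext fun i => yfun_add p q i.1) ?_
    simp [Finset.sum_add_distrib])

def zMap (t : Fin E) : ((Fin E → V) × (MaskIdx E → V)) →+ V :=
  AddMonoidHom.mk' (fun p => ∑ i, p.1 i) (by intro p q; simp [Finset.sum_add_distrib])

lemma xzMap_surj (hE : 2 ≤ E) (t : Fin E) : Function.Surjective (xzMap (V := V) t) := by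
  rintro ⟨a, c⟩
  obtain ⟨p, hp⟩ := bigMap_surj hE t ((a, 0), c)
  have h1 : p.1 t = a := congrArg (fun z => z.1.1) hp
  have h2 : ∑ i, p.1 i = c := congrArg Prod.snd hp
  exact ⟨p, Prod.ext h1 h2⟩

lemma yzMap_surj (hE : 2 ≤ E) (t : Fin E) : Function.Surjective (yzMap (V := V) t) := by
  rintro ⟨b, c⟩
  obtain ⟨p, hp⟩ := bigMap_surj hE t ((0, b), c)
  have h1 : (fun i : {i : Fin E // i ≠ t} => yfun p i.1) = b := congrArg (fun z => z.1.2) hp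
  have h2 : ∑ i, p.1 i = c := congrArg Prod.snd hp
  exact ⟨p, Prod.ext h1 h2⟩

lemma zMap_surj (hE : 2 ≤ E) (t : Fin E) : Function.Surjective (zMap (V := V) t) := by
  intro c
  obtain ⟨p, hp⟩ := bigMap_surj hE t ((0, 0), c)
  exact ⟨p, congrArg Prod.snd hp⟩

end MaskingAux

/-- client-side privacy of pairwise masking: with `g_1,...,g_E` independent
uniform on `V = F^p` and independent uniform pairwise masks `s_{ij}` (`i < j`), letting
`y i = g i + ∑_{j>i} s_{ij} - ∑_{j<i} s_{ji}`, for `E ≥ 3` and any client `t` the masked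
values `(y_i)_{i ≠ t}` reveal nothing about `g_t` beyond `∑ i, g i`:
`I(g_t ; (y_i)_{i≠t} | ∑ i, g i) = 0`. -/
theorem stmt5 {Ω : Type*} [Fintype Ω] {V : Type*} [AddCommGroup V] [Fintype V] [DecidableEq V]
    {E : ℕ} (hE : 3 ≤ E) (t : Fin E)
    (μ : Ω → ℝ) (hμ : IsPMF μ)
    (g : Fin E → Ω → V) (s : Ω → {q : Fin E × Fin E // q.1 < q.2} → V)
    -- the `g_i` and the masks `s_{ij}` are all mutually independent and uniform on `V`,
    -- i.e. their joint tuple is uniform on the product space: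
    (hjoint : ∀ a : (Fin E → V) × ({q : Fin E × Fin E // q.1 < q.2} → V),
      prEq μ (fun ω => ((fun i => g i ω), s ω)) a
        = (1 : ℝ) / (Fintype.card ((Fin E → V) × ({q : Fin E × Fin E // q.1 < q.2} → V)) : ℝ))
    (y : Fin E → Ω → V)
    (hy : ∀ i ω, y i ω = g i ω
        + ∑ q ∈ Finset.univ.filter (fun q : {q : Fin E × Fin E // q.1 < q.2} => q.1.1 = i), s ω q
        - ∑ q ∈ Finset.univ.filter (fun q : {q : Fin E × Fin E // q.1 < q.2} => q.1.2 = i), s ω q) :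
    condMutInfo μ (g t) (fun ω => fun i : {i : Fin E // i ≠ t} => y i ω)
      (fun ω => ∑ i, g i ω) = 0 := by
  have hE2 : 2 ≤ E := by omega
  have hV : Nonempty V := ⟨0⟩
  have hM : Nonempty ({i : Fin E // i ≠ t} → V) := ⟨fun _ => 0⟩
  set T : Ω → (Fin E → V) × (MaskIdx E → V) := fun ω => ((fun i => g i ω), s ω) with hT
  have hunif : ∀ a, prEq μ T a = 1 / (Fintype.card ((Fin E → V) × (MaskIdx E → V)) : ℝ) :=
    hjoint
  have hyy : ∀ (i : {i : Fin E // i ≠ t}) ω, y i.1 ω = yfun (T ω) i.1 := by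
    intro i ω
    rw [hy]
    rfl
  have eZ : entro μ (fun ω => ∑ i, g i ω) = Real.log (Fintype.card V) :=
    entro_uniform μ (fun ω => zMap (V := V) t (T ω))
      (fun b => prEq_uniform_comp μ T hunif (zMap t) (zMap_surj hE2 t) b)
  have eXZ : entro μ (fun ω => (g t ω, ∑ i, g i ω)) = Real.log (Fintype.card (V × V)) :=
    entro_uniform μ (fun ω => xzMap (V := V) t (T ω))
      (fun b => prEq_uniform_comp μ T hunif (xzMap t) (xzMap_surj hE2 t) b)
  have eYZ : entro μ (fun ω => ((fun i : {i : Fin E // i ≠ t} => yfun (T ω) i.1), ∑ i, g i ω))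
      = Real.log (Fintype.card (({i : Fin E // i ≠ t} → V) × V)) :=
    entro_uniform μ (fun ω => yzMap (V := V) t (T ω))
      (fun b => prEq_uniform_comp μ T hunif (yzMap t) (yzMap_surj hE2 t) b)
  have eXYZ : entro μ (fun ω =>
        ((g t ω, fun i : {i : Fin E // i ≠ t} => yfun (T ω) i.1), ∑ i, g i ω))
      = Real.log (Fintype.card ((V × ({i : Fin E // i ≠ t} → V)) × V)) :=
    entro_uniform μ (fun ω => bigMap (V := V) t (T ω))
      (fun b => prEq_uniform_comp μ T hunif (bigMap t) (bigMap_surj hE2 t) b)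
  simp only [condMutInfo, condEntro]
  simp only [hyy]
  rw [eZ, eXZ, eYZ, eXYZ]
  have hVne : ((Fintype.card V : ℝ)) ≠ 0 := by
    exact_mod_cast Fintype.card_ne_zero
  have hMne : ((Fintype.card ({i : Fin E // i ≠ t} → V) : ℝ)) ≠ 0 := by
    exact_mod_cast Fintype.card_ne_zero
  simp only [Fintype.card_prod]
  push_cast
  rw [Real.log_mul hVne hVne, Real.log_mul hMne hVne,
    Real.log_mul (mul_ne_zero hVne hMne) hVne, Real.log_mul hVne hMne]
  ring
end

section
/- Let F be a finite field, β_1,...,β_{k+T}, α distinct elements of F with α ∉ {β_1,...,β_{k+T}}. For data y_1,...,y_k ∈ F^m and independent uniform random Z_1,...,Z_T ∈ F^m, define the Lagrange polynomial u with u(β_r) = y_r for r ≤ k and u(β_{k+r}) = Z_r for r ≤ T. Then for any T distinct evaluation points α_{l_1},...,α_{l_T} disjoint from the β's, the vector (u(α_{l_1}),...,u(α_{l_T})) is uniformly distributed on (F^m)^T and independent of (y_1,...,y_k). Hence I(y_1,...,y_k ; u(α_{l_1}),...,u(α_{l_T})) = 0. -/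
open Finset

/-- The Lagrange basis polynomial at node `r`, evaluated at `x`. -/
noncomputable def lagBasis {F : Type*} [Field F] {N : ℕ} (β : Fin N → F) (r : Fin N) (x : F) : F :=
  ∏ l ∈ Finset.univ.erase r, (x - β l) / (β r - β l)


lemma eval_lagrange_basis {F : Type*} [Field F] {N : ℕ} (β : Fin N → F) (r : Fin N) (x : F) :
    (Lagrange.basis Finset.univ β r).eval x = lagBasis β r x := by
  simp only [Lagrange.basis, Polynomial.eval_prod, lagBasis, Lagrange.basisDivisor]
  refine Finset.prod_congr rfl fun l _ => ?_
  simp [div_eq_mul_inv, mul_comm]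

lemma key_invertible {F : Type*} [Field F] {k T : ℕ} (β : Fin (k+T) → F)
    (hβ : Function.Injective β)
    (αl : Fin T → F) (hα : Function.Injective αl) (hdisj : ∀ j r, αl j ≠ β r)
    (c : Fin T → F) (hc : ∀ j, ∑ r, lagBasis β (Fin.natAdd k r) (αl j) * c r = 0) :
    c = 0 := by
  rcases Nat.eq_zero_or_pos T with hT | hT
  · subst hT; funext r; exact r.elim0
  have hinj : Set.InjOn β (Finset.univ : Finset (Fin (k+T))) := fun a _ b _ h => hβ h
  set p : Polynomial F :=
    ∑ r : Fin T, Polynomial.C (c r) * Lagrange.basis Finset.univ β (Fin.natAdd k r) with hp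
  have hpeval : ∀ x, p.eval x = ∑ r : Fin T, c r * lagBasis β (Fin.natAdd k r) x := by
    intro x
    simp [hp, Polynomial.eval_finset_sum, eval_lagrange_basis]
  have hp0 : p = 0 := by
    apply Polynomial.eq_zero_of_natDegree_lt_card_of_eval_eq_zero p
      (f := Sum.elim (fun s : Fin k => β (Fin.castAdd T s)) αl)
    · rintro (a | a) (b | b) h <;> simp only [Sum.elim_inl, Sum.elim_inr] at h
      · have := hβ h
        simp only [Fin.castAdd_inj] at this
        exact congrArg Sum.inl this
      · exact absurd h.symm (hdisj b _)
      · exact absurd h (hdisj a _)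
      · exact congrArg Sum.inr (hα h)
    · rintro (s | j)
      · simp only [Sum.elim_inl]
        rw [hpeval]
        refine Finset.sum_eq_zero fun r _ => ?_
        rw [← eval_lagrange_basis]
        rw [Lagrange.eval_basis_of_ne (j := Fin.castAdd T s) ?_ (Finset.mem_univ _)]
        · ring
        · intro h
          have := congrArg Fin.val h
          simp only [Fin.coe_natAdd, Fin.coe_castAdd] at this
          omega
      · simp only [Sum.elim_inr]
        rw [hpeval]
        rw [← hc j]
        exact Finset.sum_congr rfl fun r _ => mul_comm _ _
    · rw [Fintype.card_sum, Fintype.card_fin, Fintype.card_fin]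
      have hle : p.natDegree ≤ k + T - 1 := by
        refine Polynomial.natDegree_sum_le_of_forall_le _ _ fun r _ => ?_
        refine le_trans (Polynomial.natDegree_C_mul_le _ _) ?_
        rw [Lagrange.natDegree_basis hinj (Finset.mem_univ _)]
        simp
      omega
  funext r
  have h0 := hpeval (β (Fin.natAdd k r))
  rw [hp0] at h0
  simp only [Polynomial.eval_zero] at h0
  have hsingle : ∑ r' : Fin T, c r' * lagBasis β (Fin.natAdd k r') (β (Fin.natAdd k r)) = c r := by
    rw [Finset.sum_eq_single r]
    · rw [← eval_lagrange_basis, Lagrange.eval_basis_self hinj (Finset.mem_univ _), mul_one]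
    · intro r' _ hne
      rw [← eval_lagrange_basis, Lagrange.eval_basis_of_ne ?_ (Finset.mem_univ _), mul_zero]
      intro h
      have := congrArg Fin.val h
      simp only [Fin.coe_natAdd] at this
      exact hne (Fin.ext (by omega))
    · intro h; exact absurd (Finset.mem_univ _) h
  rw [hsingle] at h0
  exact h0.symm

lemma sum_prEq {Ω α : Type*} [Fintype Ω] [Fintype α] [DecidableEq α]
    (μ : Ω → ℝ) (X : Ω → α) : ∑ a, prEq μ X a = ∑ ω, μ ω := by
  unfold prEq
  rw [Finset.sum_comm]
  refine Finset.sum_congr rfl fun ω _ => ?_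
  simp

lemma prEq_marginal {Ω α β : Type*} [Fintype Ω] [Fintype α] [DecidableEq α] [DecidableEq β]
    (μ : Ω → ℝ) (X : Ω → α) (Y : Ω → β) (b : β) :
    prEq μ Y b = ∑ a, prEq μ (fun ω => (X ω, Y ω)) (a, b) := by
  unfold prEq
  rw [Finset.sum_comm]
  refine Finset.sum_congr rfl fun ω _ => ?_
  simp [Prod.ext_iff, ite_and]

lemma entro_pair_of_indep {Ω α β : Type*} [Fintype Ω] [Fintype α] [DecidableEq α]
    [Fintype β] [DecidableEq β] (μ : Ω → ℝ) (X : Ω → α) (Y : Ω → β)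
    (hsum : ∑ ω, μ ω = 1) (h : IndepRV μ X Y) :
    entro μ (fun ω => (X ω, Y ω)) = entro μ X + entro μ Y := by
  have hX : ∑ a, prEq μ X a = 1 := by rw [sum_prEq, hsum]
  have hY : ∑ b, prEq μ Y b = 1 := by rw [sum_prEq, hsum]
  unfold IndepRV at h
  unfold entro
  rw [Fintype.sum_prod_type]
  simp_rw [h, Real.negMulLog_mul, Finset.sum_add_distrib, ← Finset.sum_mul, ← Finset.mul_sum]
  rw [hY, ← Finset.sum_mul, hX]
  ring


/-- security of Lagrange coding with `T` uniform noise shards: the `T`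
evaluations of the Lagrange interpolant at fresh points `α_{l_1},...,α_{l_T}` are jointly
uniform on `(F^m)^T` and independent of the data `(y_1,...,y_k)`; hence the mutual
information between the data and these evaluations is zero. -/
theorem stmt6 {Ω : Type*} [Fintype Ω] {F : Type*} [Field F] [Fintype F] [DecidableEq F]
    {k T m : ℕ}
    (β : Fin (k + T) → F) (hβ : Function.Injective β)
    (αl : Fin T → F) (hα : Function.Injective αl)
    (hdisj : ∀ j r, αl j ≠ β r)
    (μ : Ω → ℝ) (hμ : IsPMF μ)
    (Yv : Ω → Fin k → (Fin m → F)) (Zv : Ω → Fin T → (Fin m → F))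
    (hZunif : ∀ b : Fin T → (Fin m → F),
      prEq μ Zv b = (1 : ℝ) / (Fintype.card (Fin T → Fin m → F) : ℝ))
    (hindep : IndepRV μ Yv Zv)
    (U : Ω → Fin T → (Fin m → F))
    (hU : ∀ ω j, U ω j
        = (∑ r : Fin k, lagBasis β (Fin.castAdd T r) (αl j) • Yv ω r)
        + ∑ r : Fin T, lagBasis β (Fin.natAdd k r) (αl j) • Zv ω r) :
    (∀ b : Fin T → (Fin m → F),
        prEq μ U b = (1 : ℝ) / (Fintype.card (Fin T → Fin m → F) : ℝ))
    ∧ IndepRV μ Yv U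
    ∧ mutInfo μ Yv U = 0 := by
  classical
  set q : ℝ := (1 : ℝ) / (Fintype.card (Fin T → Fin m → F) : ℝ) with hq
  set f : (Fin k → Fin m → F) → (Fin T → Fin m → F) → (Fin T → Fin m → F) :=
    fun a z j => (∑ r : Fin k, lagBasis β (Fin.castAdd T r) (αl j) • a r)
        + ∑ r : Fin T, lagBasis β (Fin.natAdd k r) (αl j) • z r with hf
  have hUf : ∀ ω, U ω = f (Yv ω) (Zv ω) := fun ω => funext fun j => hU ω j
  have hfinj : ∀ a, Function.Injective (f a) := by
    intro a z z' h
    have hzero : ∀ i : Fin m, (fun r => z r i - z' r i) = 0 := by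
      intro i
      apply key_invertible β hβ αl hα hdisj
      intro j
      have hj := congrFun h j
      simp only [hf] at hj
      have hj2 : ∑ r : Fin T, lagBasis β (Fin.natAdd k r) (αl j) • z r
          = ∑ r : Fin T, lagBasis β (Fin.natAdd k r) (αl j) • z' r := add_left_cancel hj
      have hj3 := congrFun hj2 i
      simp only [Finset.sum_apply, Pi.smul_apply, smul_eq_mul] at hj3
      simp [mul_sub, Finset.sum_sub_distrib, hj3]
    funext r i
    have := congrFun (hzero i) r
    simpa [sub_eq_zero] using this
  have hbij : ∀ a, Function.Bijective (f a) :=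
    fun a => Finite.injective_iff_bijective.mp (hfinj a)
  set e : (Fin k → Fin m → F) → ((Fin T → Fin m → F) ≃ (Fin T → Fin m → F)) :=
    fun a => Equiv.ofBijective (f a) (hbij a) with he
  have hjoint : ∀ a b, prEq μ (fun ω => (Yv ω, U ω)) (a, b) = prEq μ Yv a * q := by
    intro a b
    have hstep : prEq μ (fun ω => (Yv ω, U ω)) (a, b)
        = prEq μ (fun ω => (Yv ω, Zv ω)) (a, (e a).symm b) := by
      unfold prEq
      refine Finset.sum_congr rfl fun ω _ => ?_
      refine if_congr ?_ rfl rfl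
      show (Yv ω, U ω) = (a, b) ↔ (Yv ω, Zv ω) = (a, (e a).symm b)
      rw [Prod.mk.injEq, Prod.mk.injEq]
      constructor
      · rintro ⟨h1, h2⟩
        refine ⟨h1, ?_⟩
        have hU2 : e a (Zv ω) = b := by
          rw [← h2, hUf ω, h1]; rfl
        rw [← hU2, Equiv.symm_apply_apply]
      · rintro ⟨h1, h2⟩
        refine ⟨h1, ?_⟩
        rw [hUf ω, h1]
        show e a (Zv ω) = b
        rw [h2, Equiv.apply_symm_apply]
    rw [hstep, hindep, hZunif]
  have hUunif : ∀ b, prEq μ U b = q := by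
    intro b
    rw [prEq_marginal μ Yv U b]
    simp_rw [hjoint]
    rw [← Finset.sum_mul, sum_prEq, hμ.2, one_mul]
  have hInd : IndepRV μ Yv U := by
    intro a b; rw [hjoint a b, hUunif b]
  refine ⟨hUunif, hInd, ?_⟩
  unfold mutInfo
  rw [entro_pair_of_indep μ Yv U hμ.2 hInd]
  ring
end
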